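/- The fractional chromatic number of the Golomb graph equals 10/3. -/
import Mathlib

set_option maxRecDepth 10000

/-- The Golomb graph (10 vertices, 18 edges): central triangle `{0,1,2}`,
intermediate vertices `{3,4,5}` with `3+i` adjacent to the two central
vertices other than `i`, outer triangle `{6,7,8}` with `6+i` adjacent to
`3+i`, and the center `9` adjacent to the three intermediate vertices. -/
def golomb : SimpleGraph (Fin 10) :=
  SimpleGraph.fromEdgeSet
    {s(0,1), s(0,2), s(1,2),
     s(3,1), s(3,2), s(4,0), s(4,2), s(5,0), s(5,1),
     s(6,7), s(7,8), s(6,8),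
     s(6,3), s(7,4), s(8,5),
     s(9,3), s(9,4), s(9,5)}

/-- A fractional coloring of a finite graph `G` assigns nonnegative weights to
(independent) finsets of vertices so that every vertex is covered by total
weight at least 1.  `fracChromNum G` is the infimum of the total weight. -/
noncomputable def fracChromNum {V : Type*} [Fintype V] [DecidableEq V]
    (G : SimpleGraph V) : ℝ :=
  sInf {t : ℝ | ∃ w : Finset V → ℝ,
    (∀ S, 0 ≤ w S) ∧
    (∀ S, w S ≠ 0 → ∀ u ∈ S, ∀ v ∈ S, ¬ G.Adj u v) ∧
    (∀ v : V, 1 ≤ ∑ S ∈ Finset.univ.filter (fun S => v ∈ S), w S) ∧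
    (∑ S : Finset V, w S = t)}

instance golombAdjDec : DecidableRel golomb.Adj := fun u v =>
  decidable_of_iff ((s(u,v) = s(0,1) ∨ s(u,v) = s(0,2) ∨ s(u,v) = s(1,2) ∨
    s(u,v) = s(3,1) ∨ s(u,v) = s(3,2) ∨ s(u,v) = s(4,0) ∨ s(u,v) = s(4,2) ∨
    s(u,v) = s(5,0) ∨ s(u,v) = s(5,1) ∨ s(u,v) = s(6,7) ∨ s(u,v) = s(7,8) ∨
    s(u,v) = s(6,8) ∨ s(u,v) = s(6,3) ∨ s(u,v) = s(7,4) ∨ s(u,v) = s(8,5) ∨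
    s(u,v) = s(9,3) ∨ s(u,v) = s(9,4) ∨ s(u,v) = s(9,5)) ∧ u ≠ v) (by
      rw [golomb, SimpleGraph.fromEdgeSet_adj]
      simp [Set.mem_insert_iff])

lemma no_indep_four : ∀ a b c d : Fin 10,
    a ≠ b → a ≠ c → a ≠ d → b ≠ c → b ≠ d → c ≠ d →
    golomb.Adj a b ∨ golomb.Adj a c ∨ golomb.Adj a d ∨
    golomb.Adj b c ∨ golomb.Adj b d ∨ golomb.Adj c d := by decide

lemma exists_four {α : Type*} [DecidableEq α] (S : Finset α) (h : 4 ≤ S.card) :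
    ∃ a ∈ S, ∃ b ∈ S, ∃ c ∈ S, ∃ d ∈ S,
      a ≠ b ∧ a ≠ c ∧ a ≠ d ∧ b ≠ c ∧ b ≠ d ∧ c ≠ d := by
  obtain ⟨a, ha⟩ := Finset.card_pos.mp (by omega : 0 < S.card)
  have h1 : 3 ≤ (S.erase a).card := by
    have := Finset.card_erase_of_mem ha; omega
  obtain ⟨b, hb⟩ := Finset.card_pos.mp (by omega : 0 < (S.erase a).card)
  have h2 : 2 ≤ ((S.erase a).erase b).card := by
    have := Finset.card_erase_of_mem hb; omega
  obtain ⟨c, hc⟩ := Finset.card_pos.mp (by omega : 0 < ((S.erase a).erase b).card)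
  have h3 : 1 ≤ (((S.erase a).erase b).erase c).card := by
    have := Finset.card_erase_of_mem hc; omega
  obtain ⟨d, hd⟩ := Finset.card_pos.mp (by omega : 0 < (((S.erase a).erase b).erase c).card)
  simp only [Finset.mem_erase] at hb hc hd
  exact ⟨a, ha, b, hb.2, c, hc.2.2, d, hd.2.2.2,
    fun h => hb.1 h.symm, fun h => hc.2.1 h.symm, fun h => hd.2.2.1 h.symm,
    fun h => hc.1 h.symm, fun h => hd.2.1 h.symm, fun h => hd.1 h.symm⟩

lemma indep_card_le (S : Finset (Fin 10))
    (h : ∀ u ∈ S, ∀ v ∈ S, ¬ golomb.Adj u v) : S.card ≤ 3 := by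
  by_contra hc
  obtain ⟨a, ha, b, hb, c, hcS, d, hd, hab, hac, had, hbc, hbd, hcd⟩ :=
    exists_four S (by omega)
  rcases no_indep_four a b c d hab hac had hbc hbd hcd with h'|h'|h'|h'|h'|h'
  · exact h a ha b hb h'
  · exact h a ha c hcS h'
  · exact h a ha d hd h'
  · exact h b hb c hcS h'
  · exact h b hb d hd h'
  · exact h c hcS d hd h'

/-- The ten independent triples used in the optimal fractional coloring. -/
def golombTriples : Finset (Finset (Fin 10)) :=
  { {9,0,6}, {9,1,7}, {9,2,8}, {3,4,5},
    {0,3,7}, {0,3,8}, {1,4,6}, {1,4,8}, {2,5,6}, {2,5,7} }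

lemma triples_indep : ∀ S ∈ golombTriples, ∀ u ∈ S, ∀ v ∈ S, ¬ golomb.Adj u v := by
  intro S hS
  fin_cases hS <;> decide

lemma triples_card : golombTriples.card = 10 := by decide

lemma triples_cover : ∀ v : Fin 10,
    (golombTriples.filter (fun S => v ∈ S)).card = 3 := by decide

/-- The fractional chromatic number of the Golomb graph equals `10/3`. -/
theorem golomb_fracChromNum : fracChromNum golomb = 10 / 3 := by
  set A : Set ℝ := {t : ℝ | ∃ w : Finset (Fin 10) → ℝ,
    (∀ S, 0 ≤ w S) ∧
    (∀ S, w S ≠ 0 → ∀ u ∈ S, ∀ v ∈ S, ¬ golomb.Adj u v) ∧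
    (∀ v : Fin 10, 1 ≤ ∑ S ∈ Finset.univ.filter (fun S => v ∈ S), w S) ∧
    (∑ S : Finset (Fin 10), w S = t)} with hA
  have hmem : (10 / 3 : ℝ) ∈ A := by
    refine ⟨fun S => if S ∈ golombTriples then (1/3 : ℝ) else 0, ?_, ?_, ?_, ?_⟩
    · intro S; dsimp only; split <;> norm_num
    · intro S hS u hu v hv
      have hSL : S ∈ golombTriples := by
        by_contra h; exact hS (if_neg h)
      exact triples_indep S hSL u hu v hv
    · intro v
      rw [Finset.sum_ite_mem, Finset.filter_inter, Finset.univ_inter,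
        Finset.sum_const, triples_cover v]
      norm_num
    · rw [Finset.sum_ite_mem, Finset.univ_inter, Finset.sum_const, triples_card]
      norm_num
  have hlb : ∀ t ∈ A, (10 / 3 : ℝ) ≤ t := by
    rintro t ⟨w, h0, hind, hcov, hsum⟩
    have key : (10 : ℝ) ≤ ∑ v : Fin 10,
        ∑ S ∈ Finset.univ.filter (fun S => v ∈ S), w S := by
      calc (10 : ℝ) = ∑ _v : Fin 10, 1 := by simp
        _ ≤ _ := Finset.sum_le_sum fun v _ => hcov v
    have swap : (∑ v : Fin 10, ∑ S ∈ Finset.univ.filter (fun S => v ∈ S), w S)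
        = ∑ S : Finset (Fin 10), (S.card : ℝ) * w S := by
      simp_rw [Finset.sum_filter]
      rw [Finset.sum_comm]
      refine Finset.sum_congr rfl fun S _ => ?_
      rw [Finset.sum_ite_mem, Finset.univ_inter, Finset.sum_const, nsmul_eq_mul]
    have bound : (∑ S : Finset (Fin 10), (S.card : ℝ) * w S)
        ≤ ∑ S : Finset (Fin 10), 3 * w S := by
      refine Finset.sum_le_sum fun S _ => ?_
      by_cases h : w S = 0
      · simp [h]
      · refine mul_le_mul_of_nonneg_right ?_ (h0 S)
        exact_mod_cast indep_card_le S (hind S h)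
    have h3t : (10 : ℝ) ≤ 3 * ∑ S : Finset (Fin 10), w S := by
      calc (10 : ℝ) ≤ _ := key
        _ = _ := swap
        _ ≤ _ := bound
        _ = _ := (Finset.mul_sum _ _ _).symm
    rw [hsum] at h3t
    linarith
  rw [fracChromNum, ← hA]
  exact le_antisymm (csInf_le ⟨10/3, hlb⟩ hmem) (le_csInf ⟨10/3, hmem⟩ hlb)
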